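/- Let X, Y be strings with |Y| = |X| + 2K, let m = |X|, and define D[i,j] = min_{0 ≤ s' ≤ 2K} ED(X[0..i], Y[s'..j]). Then for every s ∈ {−K,…,K}: D[m, m+K+s] ≤ ED(X, Y_s) ≤ 2·D[m, m+K+s], where Y_s = Y[K+s .. m+K+s]. -/

import Mathlib

/-- The substring of `X` with indices in `{i, ..., j-1}` (out-of-bounds indices clipped). -/
def listSub {α : Type*} (X : List α) (i j : ℕ) : List α := (X.take j).drop i

/-- Substring with possibly negative (integer) endpoints, clipped. -/
def listSubZ {α : Type*} (X : List α) (i j : ℤ) : List α := listSub X i.toNat j.toNat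

/-! The Levenshtein machinery below was removed from Mathlib (`Mathlib/Data/List/EditDistance/Defs.lean`);
it is reproduced here with its old definitions. -/

namespace Levenshtein

/-- Costs of the edit operations (as in the old Mathlib). -/
structure Cost (α β δ : Type*) where
  delete : α → δ
  insert : β → δ
  substitute : α → β → δ

/-- Unit costs (as in the old Mathlib). -/
def defaultCost {α : Type*} [DecidableEq α] : Cost α α ℕ where
  delete _ := 1
  insert _ := 1
  substitute a b := if a = b then 0 else 1

/-- One row step of the old Mathlib algorithm. -/
def impl {α β δ : Type*} [AddZeroClass δ] [Min δ] (C : Cost α β δ)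
    (xs : List α) (y : β) (d : {r : List δ // 0 < r.length}) : {r : List δ // 0 < r.length} :=
  let ⟨ds, w⟩ := d
  xs.zip (ds.zip ds.tail) |>.foldr
    (init := ⟨[ds.getLast (List.length_pos_iff.mp w) + C.insert y], by simp⟩)
    (fun ⟨x, d₀, d₁⟩ ⟨r, w⟩ =>
      ⟨min (C.delete x + r[0]'w) (min (C.insert y + d₀) (C.substitute x y + d₁)) :: r, by simp⟩)

end Levenshtein

open Levenshtein in
/-- Old Mathlib `suffixLevenshtein`. -/
def suffixLevenshtein {α β δ : Type*} [AddZeroClass δ] [Min δ] (C : Cost α β δ)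
    (xs : List α) (ys : List β) : {r : List δ // 0 < r.length} :=
  ys.foldr
    (impl C xs)
    (xs.foldr (init := ⟨[0], by simp⟩) (fun a ⟨r, w⟩ => ⟨(C.delete a + r[0]'w) :: r, by simp⟩))

open Levenshtein in
/-- Old Mathlib `levenshtein`. -/
def levenshtein {α β δ : Type*} [AddZeroClass δ] [Min δ] (C : Cost α β δ)
    (xs : List α) (ys : List β) : δ :=
  let ⟨r, w⟩ := suffixLevenshtein C xs ys
  r[0]'w

/-- Edit distance (Levenshtein distance) with unit costs. -/
def ED {α : Type*} [DecidableEq α] (X Y : List α) : ℕ :=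
  levenshtein Levenshtein.defaultCost X Y

section LevAux
open Levenshtein

variable {α β : Type*} (C : Cost α β ℕ)

theorem lev_impl_cons {x : α} {xs : List α} {y : β} {d : ℕ} {ds : List ℕ}
    (w : 0 < (d :: ds).length) (hw0 : 0 < ds.length) :
    impl C (x :: xs) y ⟨d :: ds, w⟩ =
      ⟨min (C.delete x + (impl C xs y ⟨ds, hw0⟩).1[0]'(impl C xs y ⟨ds, hw0⟩).2)
        (min (C.insert y + d) (C.substitute x y + ds[0]'hw0)) :: (impl C xs y ⟨ds, hw0⟩).1,
        by simp⟩ :=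
  match ds, hw0 with | _ :: _, _ => rfl

theorem lev_impl_length (xs : List α) (y : β) (d : {r : List ℕ // 0 < r.length})
    (w : d.1.length = xs.length + 1) : (impl C xs y d).1.length = xs.length + 1 := by
  induction xs generalizing d with
  | nil => rfl
  | cons x xs ih =>
    obtain ⟨ds, hw⟩ := d
    rcases ds with _ | ⟨d₁, _ | ⟨d₂, ds⟩⟩
    · simp at hw
    · simp at w
    · rw [lev_impl_cons C hw (by simp)]
      simp only [List.length_cons, Nat.add_right_cancel_iff]
      exact ih ⟨d₂ :: ds, by simp⟩ (by simpa using w)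

theorem lev_suffix_length (xs : List α) (ys : List β) :
    (suffixLevenshtein C xs ys).1.length = xs.length + 1 := by
  induction ys with
  | nil =>
    induction xs with
    | nil => rfl
    | cons x xs ih => exact congrArg Nat.succ ih
  | cons y ys ih => exact lev_impl_length C xs y _ ih

theorem lev_aux_eq {x y : {r : List ℕ // 0 < r.length}}
    (w₀ : x.1[0]'x.2 = y.1[0]'y.2) (w : x.1.tail = y.1.tail) : x = y := by
  match x, y with
  | ⟨hx :: tx, _⟩, ⟨hy :: ty, _⟩ => simp_all

theorem lev_suffix_cons₁ (x : α) (xs : List α) (ys : List β) :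
    suffixLevenshtein C (x :: xs) ys =
      ⟨levenshtein C (x :: xs) ys :: (suffixLevenshtein C xs ys).1, by simp⟩ := by
  induction ys with
  | nil => rfl
  | cons y ys ih =>
    apply lev_aux_eq
    · rfl
    · show (impl C (x :: xs) y (suffixLevenshtein C (x :: xs) ys)).1.tail = _
      rw [ih, lev_impl_cons C _ (by simp [lev_suffix_length])]
      rfl

@[simp] theorem levenshtein_nil_nil : levenshtein C [] [] = 0 := rfl

theorem lev_suffix_nil' (ys : List β) :
    (suffixLevenshtein C [] ys).1 = [levenshtein C [] ys] := by
  have h := lev_suffix_length C ([] : List α) ys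
  show (suffixLevenshtein C [] ys).1 = [(suffixLevenshtein C [] ys).1[0]'(by simp [h])]
  generalize hr : (suffixLevenshtein C [] ys) = r at h
  obtain ⟨l, hl⟩ := r
  rcases l with _ | ⟨a, _ | ⟨b, l⟩⟩
  · simp at hl
  · rfl
  · simp at h

@[simp] theorem levenshtein_nil_cons (y : β) (ys : List β) :
    levenshtein C [] (y :: ys) = C.insert y + levenshtein C [] ys := by
  show (impl C [] y (suffixLevenshtein C [] ys)).1[0]'(impl C [] y _).2 = _
  have h := lev_suffix_nil' C ys
  generalize hr : (suffixLevenshtein C [] ys) = r at h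
  obtain ⟨l, hl⟩ := r
  subst h
  show [levenshtein C [] ys].getLast _ + C.insert y = _
  simp [Nat.add_comm]

@[simp] theorem levenshtein_cons_nil (x : α) (xs : List α) :
    levenshtein C (x :: xs) [] = C.delete x + levenshtein C xs [] := rfl

theorem levenshtein_cons_cons (x : α) (xs : List α) (y : β) (ys : List β) :
    levenshtein C (x :: xs) (y :: ys) =
      min (C.delete x + levenshtein C xs (y :: ys))
        (min (C.insert y + levenshtein C (x :: xs) ys)
          (C.substitute x y + levenshtein C xs ys)) := by
  show (impl C (x :: xs) y (suffixLevenshtein C (x :: xs) ys)).1[0]'(impl C _ y _).2 = _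
  have hl : 0 < (suffixLevenshtein C xs ys).1.length := by simp [lev_suffix_length]
  rw [lev_suffix_cons₁ C x xs ys, lev_impl_cons C _ hl]
  have e1 : levenshtein C xs ys = (suffixLevenshtein C xs ys).1[0]'hl := rfl
  have e2 : levenshtein C xs (y :: ys) =
      (impl C xs y (suffixLevenshtein C xs ys)).1[0]'(impl C xs y _).2 := rfl
  rw [e1, e2]
  rfl

end LevAux

section Aux

variable {α : Type*} [DecidableEq α]

@[simp] lemma ED_nil_nil : ED (α := α) [] [] = 0 := by simp [ED]

@[simp] lemma ED_nil_cons (y : α) (B : List α) : ED [] (y :: B) = 1 + ED [] B := by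
  simp [ED, Levenshtein.defaultCost]

@[simp] lemma ED_cons_nil (x : α) (A : List α) : ED (x :: A) [] = 1 + ED A [] := by
  simp [ED, Levenshtein.defaultCost]

lemma ED_cons_cons (x : α) (A : List α) (y : α) (B : List α) :
    ED (x :: A) (y :: B) =
      min (1 + ED A (y :: B))
        (min (1 + ED (x :: A) B) ((if x = y then 0 else 1) + ED A B)) := by
  simp only [ED, levenshtein_cons_cons]
  rfl

lemma ED_nil_left (B : List α) : ED [] B = B.length := by
  induction B with
  | nil => simp
  | cons y B ih => simp [ih]; omega

lemma ED_delete_le (x : α) (A B : List α) : ED (x :: A) B ≤ 1 + ED A B := by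
  cases B with
  | nil => simp
  | cons y B => rw [ED_cons_cons]; exact min_le_left _ _

lemma ED_insert_le (A : List α) (y : α) (B : List α) :
    ED A (y :: B) ≤ 1 + ED A B := by
  cases A with
  | nil => simp
  | cons x A =>
    rw [ED_cons_cons]
    exact le_trans (min_le_right _ _) (min_le_left _ _)

lemma ED_le_cons_right (A : List α) (y : α) (B : List α) :
    ED A B ≤ ED A (y :: B) + 1 := by
  induction A with
  | nil => simp [ED_nil_left]; omega
  | cons x A ih =>
    rw [ED_cons_cons]
    have h1 := ED_delete_le x A B
    generalize (if x = y then 0 else 1) = c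
    omega

/-- length difference lower bound, one side -/
lemma length_le_ED_add (A B : List α) : A.length ≤ ED A B + B.length := by
  induction A generalizing B with
  | nil => simp
  | cons x A ihA =>
    induction B with
    | nil => have := ihA []; simp at this ⊢; omega
    | cons y B ihB =>
      rw [ED_cons_cons]
      have h1 := ihA (y :: B)
      have h2 := ihA B
      generalize (if x = y then 0 else 1) = c at *
      simp only [List.length_cons] at *
      omega

lemma length_le_ED_add' (A B : List α) : B.length ≤ ED A B + A.length := by
  induction A generalizing B with
  | nil => simp [ED_nil_left]
  | cons x A ihA =>
    induction B with
    | nil => simp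
    | cons y B ihB =>
      rw [ED_cons_cons]
      have h1 := ihA (y :: B)
      have h2 := ihA B
      generalize (if x = y then 0 else 1) = c at *
      simp only [List.length_cons] at *
      omega

lemma ED_le_append_right (A t B : List α) :
    ED A (t ++ B) ≤ ED A B + t.length := by
  induction t with
  | nil => simp
  | cons y t ih =>
    have := ED_insert_le A y (t ++ B)
    simp only [List.cons_append, List.length_cons] at *
    omega

lemma ED_le_of_append (A t B : List α) :
    ED A B ≤ ED A (t ++ B) + t.length := by
  induction t with
  | nil => simp
  | cons y t ih =>
    have := ED_le_cons_right A y (t ++ B)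
    simp only [List.cons_append, List.length_cons] at *
    omega

end Aux

/-- The dynamic-programming table `D[i,j] = min_{0 ≤ s' ≤ 2K} ED(X[0..i], Y[s'..j])`
gives a 2-approximation of `ED(X, Y_s)` at `D[m, m+K+s]`:
`D[m, m+K+s] ≤ ED(X, Y_s) ≤ 2·D[m, m+K+s]` where `Y_s = Y[K+s..m+K+s]`. -/
theorem dp_two_approximation {α : Type*} [DecidableEq α]
    (X Y : List α) (K : ℕ) (hlen : Y.length = X.length + 2 * K)
    (s : ℤ) (hs1 : -(K : ℤ) ≤ s) (hs2 : s ≤ K) :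
    sInf {d : ℕ | ∃ s' ≤ 2 * K,
        d = ED X (listSubZ Y (s' : ℤ) ((X.length : ℤ) + K + s))}
      ≤ ED X (listSubZ Y ((K : ℤ) + s) ((X.length : ℤ) + K + s)) ∧
    ED X (listSubZ Y ((K : ℤ) + s) ((X.length : ℤ) + K + s))
      ≤ 2 * sInf {d : ℕ | ∃ s' ≤ 2 * K,
        d = ED X (listSubZ Y (s' : ℤ) ((X.length : ℤ) + K + s))} := by
  set m := X.length with hm
  -- natural number versions of the endpoints
  set k : ℕ := ((K : ℤ) + s).toNat with hk
  have hk2 : (k : ℤ) = (K : ℤ) + s := by omega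
  have hkK : k ≤ 2 * K := by omega
  have hj : ((m : ℤ) + K + s).toNat = m + k := by omega
  -- the element witness for the lower bound
  have hmem : ED X (listSubZ Y ((K : ℤ) + s) ((X.length : ℤ) + K + s)) ∈
      {d : ℕ | ∃ s' ≤ 2 * K,
        d = ED X (listSubZ Y (s' : ℤ) ((X.length : ℤ) + K + s))} := by
    refine ⟨k, hkK, ?_⟩
    simp only [listSubZ, Int.toNat_natCast, hk2]
  constructor
  · exact Nat.sInf_le hmem
  · have hne : {d : ℕ | ∃ s' ≤ 2 * K,
        d = ED X (listSubZ Y (s' : ℤ) ((X.length : ℤ) + K + s))}.Nonempty := ⟨_, hmem⟩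
    obtain ⟨s', hs', hd⟩ := Nat.sInf_mem hne
    set d := sInf {d : ℕ | ∃ s'' ≤ 2 * K,
        d = ED X (listSubZ Y (s'' : ℤ) ((X.length : ℤ) + K + s))} with hdd
    set L := Y.take (m + k) with hL
    have hLlen : L.length = m + k := by
      rw [hL, List.length_take]
      omega
    have hBdef : listSubZ Y ((K : ℤ) + s) ((X.length : ℤ) + K + s) = L.drop k := by
      simp only [listSubZ, listSub, ← hm, hj, ← hk2, Int.toNat_natCast, hL]
    have hB'def : listSubZ Y ((s' : ℤ)) ((X.length : ℤ) + K + s) = L.drop s' := by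
      simp only [listSubZ, listSub, ← hm, hj, Int.toNat_natCast, hL]
    rw [hBdef]
    rw [hB'def] at hd
    have hBlen : (L.drop k).length = m := by rw [List.length_drop, hLlen]; omega
    rcases le_total s' k with hcase | hcase
    · -- L.drop s' = t ++ L.drop k
      have hsplit : L.drop s' = (L.drop s').take (k - s') ++ L.drop k := by
        conv_lhs => rw [← List.take_append_drop (k - s') (L.drop s')]
        rw [List.drop_drop]
        congr 2
        omega
      set t := (L.drop s').take (k - s') with ht
      rw [hsplit] at hd
      -- length bound: t.length ≤ d
      have h1 := length_le_ED_add' X (t ++ L.drop k)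
      rw [← hd] at h1
      simp only [List.length_append, hBlen] at h1
      have h2 := ED_le_of_append X t (L.drop k)
      rw [← hd] at h2
      omega
    · -- L.drop k = t ++ L.drop s'
      have hsplit : L.drop k = (L.drop k).take (s' - k) ++ L.drop s' := by
        conv_lhs => rw [← List.take_append_drop (s' - k) (L.drop k)]
        rw [List.drop_drop]
        congr 2
        omega
      set t := (L.drop k).take (s' - k) with ht
      -- length bound: t.length ≤ d
      have h1 := length_le_ED_add X (L.drop s')
      rw [← hd] at h1
      have hlenEq : t.length + (L.drop s').length = m := by
        have := congrArg List.length hsplit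
        simp only [List.length_append] at this
        omega
      have h2 := ED_le_append_right X t (L.drop s')
      rw [← hd, ← hsplit] at h2
      omega
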